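/- arXiv:0809.0847 — 4 statements merged into one kernel-verified Lean document; each statement's English description precedes it below -/
import Mathlib

section
/- For an X-program given by a k-by-n binary matrix P with angles θ_p for each row p, the probability that the output equals x ∈ F_2^n, defined as |⟨x| exp(Σ_p iθ_p ⊗_{j: p_j=1} X_j) |0^n⟩|², equals |Σ_{a ∈ F_2^k : a·P = x} ∏_{p : a_p = 0} cos θ_p · ∏_{p : a_p = 1} i sin θ_p|². -/
attribute [local instance] Matrix.linftyOpNormedRing Matrix.linftyOpNormedAlgebra

/-- The tensor product of Pauli `X` operators over the qubits `j` with `v j = 1`, as a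
matrix acting on `ℂ^{F₂ⁿ}` in the computational basis: it maps `|b⟩` to `|b + v⟩`. -/
def pauliXs (n : ℕ) (v : Fin n → ZMod 2) :
    Matrix (Fin n → ZMod 2) (Fin n → ZMod 2) ℂ :=
  fun x y => if y = x + v then 1 else 0

open NormedSpace Finset

lemma pauliXs_mul {n : ℕ} (u v : Fin n → ZMod 2) :
    pauliXs n u * pauliXs n v = pauliXs n (u + v) := by
  ext x y
  rw [Matrix.mul_apply]
  simp only [pauliXs, ite_mul, one_mul, zero_mul]
  rw [Finset.sum_ite_eq' Finset.univ (x + u) (fun z => if y = z + v then (1:ℂ) else 0)]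
  simp [add_assoc]

lemma pauliXs_zero {n : ℕ} : pauliXs n 0 = 1 := by
  ext x y
  simp [pauliXs, Matrix.one_apply, eq_comm]

lemma zmod2_add_self (a : ZMod 2) : a + a = 0 := by revert a; decide

lemma vadd_self {n : ℕ} (v : Fin n → ZMod 2) : v + v = 0 :=
  funext fun j => zmod2_add_self (v j)

lemma pauliXs_commute {n : ℕ} (u v : Fin n → ZMod 2) :
    Commute (pauliXs n u) (pauliXs n v) := by
  unfold Commute SemiconjBy
  rw [pauliXs_mul, pauliXs_mul, add_comm]

lemma pauliXs_sq {n : ℕ} (v : Fin n → ZMod 2) : pauliXs n v * pauliXs n v = 1 := by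
  rw [pauliXs_mul, vadd_self, pauliXs_zero]

lemma pauliXs_pow_even {n : ℕ} (v : Fin n → ZMod 2) (m : ℕ) :
    pauliXs n v ^ (2 * m) = 1 := by
  rw [pow_mul, sq, pauliXs_sq, one_pow]

lemma exp_smul_pauli {n : ℕ} (θ : ℝ) (v : Fin n → ZMod 2) :
    exp ((Complex.I * (θ : ℂ)) • pauliXs n v) =
      (Real.cos θ : ℂ) • (1 : Matrix (Fin n → ZMod 2) (Fin n → ZMod 2) ℂ)
        + (Complex.I * (Real.sin θ : ℂ)) • pauliXs n v := by
  rw [exp_eq_tsum (𝕂 := ℂ)]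
  refine HasSum.tsum_eq ?_
  rw [Complex.ofReal_cos, Complex.ofReal_sin]
  refine HasSum.even_add_odd ?_ ?_
  · have h := (Complex.hasSum_cos (θ : ℂ)).smul_const
      (1 : Matrix (Fin n → ZMod 2) (Fin n → ZMod 2) ℂ)
    convert h using 2 with m
    · rfl
    rw [smul_pow, pauliXs_pow_even, smul_smul]
    congr 1
    rw [pow_mul, mul_pow, Complex.I_sq, neg_one_mul, neg_pow, ← pow_mul]
    have hf : ((Nat.factorial (2 * m) : ℂ)) ≠ 0 := by
      exact_mod_cast Nat.factorial_ne_zero _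
    field_simp
  · have h := ((Complex.hasSum_sin (θ : ℂ)).mul_right Complex.I).smul_const (pauliXs n v)
    have hIs : (Complex.sin (θ:ℂ) * Complex.I) • pauliXs n v
        = (Complex.I * Complex.sin (θ:ℂ)) • pauliXs n v := by rw [mul_comm]
    rw [← hIs]
    convert h using 2 with m
    · rfl
    rw [smul_pow, pow_succ (pauliXs n v), pauliXs_pow_even, one_mul, smul_smul]
    congr 1
    rw [pow_succ, pow_mul, mul_pow, Complex.I_sq, neg_one_mul, neg_pow, ← pow_mul]
    have hf : ((Nat.factorial (2 * m + 1) : ℂ)) ≠ 0 := by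
      exact_mod_cast Nat.factorial_ne_zero _
    field_simp
    ring
  
lemma exp_sum_pauli {n k : ℕ} (θ : Fin k → ℝ) (v : Fin k → (Fin n → ZMod 2))
    (s : Finset (Fin k)) :
    exp (∑ i ∈ s, (Complex.I * (θ i : ℂ)) • pauliXs n (v i)) =
      ∑ t ∈ s.powerset,
        ((∏ i ∈ s \ t, (Real.cos (θ i) : ℂ)) *
            ∏ i ∈ t, Complex.I * (Real.sin (θ i) : ℂ)) •
          pauliXs n (∑ i ∈ t, v i) := by
  induction s using Finset.induction with
  | empty => simp [pauliXs_zero, exp_zero]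
  | @insert j s hj ih =>
    rw [Finset.sum_insert hj, show exp ((Complex.I * (θ j : ℂ)) • pauliXs n (v j)
        + ∑ i ∈ s, (Complex.I * (θ i : ℂ)) • pauliXs n (v i))
        = exp ((Complex.I * (θ j : ℂ)) • pauliXs n (v j))
          * exp (∑ i ∈ s, (Complex.I * (θ i : ℂ)) • pauliXs n (v i)) from
        exp_add_of_commute ?_, ih, exp_smul_pauli,
      Finset.sum_powerset_insert hj]
    · rw [add_mul, Finset.mul_sum, Finset.mul_sum]
      congr 1
      · refine Finset.sum_congr rfl fun t ht => ?_
        rw [Finset.mem_powerset] at ht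
        have h1 : insert j s \ t = insert j (s \ t) := by
          ext y
          simp only [Finset.mem_sdiff, Finset.mem_insert]
          constructor
          · rintro ⟨h | h, h2⟩
            · exact Or.inl h
            · exact Or.inr ⟨h, h2⟩
          · rintro (rfl | ⟨h, h2⟩)
            · exact ⟨Or.inl rfl, fun hc => hj (ht hc)⟩
            · exact ⟨Or.inr h, h2⟩
        have hjst : j ∉ s \ t := fun hc => hj (Finset.mem_sdiff.mp hc).1
        rw [h1, Finset.prod_insert hjst, smul_mul_smul_comm, one_mul]
        congr 1
        ring
      · refine Finset.sum_congr rfl fun t ht => ?_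
        rw [Finset.mem_powerset] at ht
        have hjt : j ∉ t := fun hc => hj (ht hc)
        have h1 : insert j s \ insert j t = s \ t := by
          ext y
          simp only [Finset.mem_sdiff, Finset.mem_insert, not_or]
          constructor
          · rintro ⟨h | h, h2, h3⟩
            · exact absurd h h2
            · exact ⟨h, h3⟩
          · rintro ⟨h, h2⟩
            exact ⟨Or.inr h, fun hc => hj (hc ▸ h), h2⟩
        rw [h1, Finset.prod_insert hjt, Finset.sum_insert hjt, smul_mul_smul_comm,
          ← pauliXs_mul]
        congr 1
        ring
    · exact Commute.sum_right _ _ _ fun i _ =>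
        ((pauliXs_commute (v j) (v i)).smul_right _).smul_left _

lemma zmod2_cases (a : ZMod 2) : a = 0 ∨ a = 1 := by revert a; decide

theorem xprog_sum_over_paths {k n : ℕ} (P : Matrix (Fin k) (Fin n) (ZMod 2))
    (θ : Fin k → ℝ) (x : Fin n → ZMod 2) :
    Norm.norm
        ((NormedSpace.exp
            (∑ i : Fin k, (Complex.I * (θ i : ℂ)) • pauliXs n (P i))) x 0) ^ 2 =
      Norm.norm (∑ a ∈ Finset.univ.filter
          (fun a : Fin k → ZMod 2 => Matrix.vecMul a P = x),
        (∏ i ∈ Finset.univ.filter (fun i : Fin k => a i = 0), (Real.cos (θ i) : ℂ)) *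
          ∏ i ∈ Finset.univ.filter (fun i : Fin k => a i = 1),
            Complex.I * (Real.sin (θ i) : ℂ)) ^ 2 := by
  rw [exp_sum_pauli θ (fun i => P i) Finset.univ]
  congr 2
  have key : (∑ t ∈ Finset.univ.powerset,
        ((∏ i ∈ Finset.univ \ t, (Real.cos (θ i) : ℂ)) *
            ∏ i ∈ t, Complex.I * (Real.sin (θ i) : ℂ)) •
          pauliXs n (∑ i ∈ t, P i)) x 0
      = ∑ t ∈ Finset.univ.powerset,
        ((∏ i ∈ Finset.univ \ t, (Real.cos (θ i) : ℂ)) *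
            ∏ i ∈ t, Complex.I * (Real.sin (θ i) : ℂ)) *
          (if (∑ i ∈ t, P i) = x then 1 else 0) := by
    rw [Matrix.sum_apply]
    refine Finset.sum_congr rfl fun t _ => ?_
    rw [Matrix.smul_apply, smul_eq_mul]
    congr 1
    have hiff : ((0 : Fin n → ZMod 2) = x + ∑ i ∈ t, P i) ↔ ((∑ i ∈ t, P i) = x) := by
      constructor
      · intro h
        have h2 := congrArg (fun w => x + w) h
        simpa [← add_assoc, vadd_self x] using h2.symm
      · rintro rfl
        rw [vadd_self]
    simp only [pauliXs]
    by_cases h : (∑ i ∈ t, P i) = x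
    · rw [if_pos (hiff.mpr h), if_pos h]
    · rw [if_neg (fun hc => h (hiff.mp hc)), if_neg h]
  rw [key]
  conv_rhs => rw [Finset.sum_filter]
  refine Finset.sum_nbij' (fun t i => if i ∈ t then (1 : ZMod 2) else 0)
    (fun a => Finset.univ.filter (fun i => a i = 1))
    (fun t _ => Finset.mem_univ _) (fun a _ => Finset.mem_powerset.mpr (Finset.subset_univ _))
    ?_ ?_ ?_
  · intro t _
    ext i
    simp only [Finset.mem_filter, Finset.mem_univ, true_and]
    by_cases h : i ∈ t <;> simp [h]
  · intro a _
    funext i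
    simp only [Finset.mem_filter, Finset.mem_univ, true_and]
    rcases zmod2_cases (a i) with h | h <;> simp [h]
  · intro t _
    have h1 : Finset.univ.filter
        (fun i => (fun i => if i ∈ t then (1 : ZMod 2) else 0) i = 1) = t := by
      ext i
      simp only [Finset.mem_filter, Finset.mem_univ, true_and]
      by_cases h : i ∈ t <;> simp [h]
    have h0 : Finset.univ.filter
        (fun i => (fun i => if i ∈ t then (1 : ZMod 2) else 0) i = 0) = Finset.univ \ t := by
      ext i
      simp only [Finset.mem_filter, Finset.mem_univ, true_and, Finset.mem_sdiff]
      by_cases h : i ∈ t <;> simp [h]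
    have hv : Matrix.vecMul (fun i => if i ∈ t then (1 : ZMod 2) else 0) P
        = ∑ i ∈ t, P i := by
      funext j
      simp only [Matrix.vecMul, dotProduct, ite_mul, one_mul, zero_mul]
      rw [Finset.sum_ite_mem, Finset.univ_inter]
      exact (Finset.sum_apply j t fun i => P i).symm
    rw [hv, h1, h0, mul_ite, mul_one, mul_zero]
end

section
/- For a constant-action X-program with matrix P and action θ, and any s ∈ F_2^n, the bias P(X·sᵀ = 0) equals the expectation E_{c ~ C_s}[cos²(θ(n_s − 2·wt(c)))], where C_s is the binary linear code spanned by the columns of the submatrix P_s of P consisting of rows p with p·sᵀ = 1, n_s is the number of such rows, wt is the Hamming weight, and c ranges uniformly over C_s. -/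
/-- Hamming weight of a binary vector: number of coordinates equal to 1. -/
def wt {ι : Type*} [Fintype ι] (a : ι → ZMod 2) : ℕ :=
  (Finset.univ.filter fun i => a i = 1).card

/-- Output distribution of the constant-action X-program given by the k-by-n binary
matrix `P` with action `θ`: `P(X = x)`. -/
noncomputable def XProb {k n : ℕ} (P : Matrix (Fin k) (Fin n) (ZMod 2)) (θ : ℝ)
    (x : Fin n → ZMod 2) : ℝ :=
  ‖∑ a ∈ Finset.univ.filter (fun a : Fin k → ZMod 2 => Matrix.vecMul a P = x),
    (Real.cos θ : ℂ) ^ (k - wt a) * (Complex.I * Real.sin θ) ^ (wt a)‖ ^ 2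

/-- The bias of the X-program output distribution in direction `s`:
`P(X ⬝ sᵀ = 0)`, the probability that the output is orthogonal to `s` over `F₂`. -/
noncomputable def bias {k n : ℕ} (P : Matrix (Fin k) (Fin n) (ZMod 2)) (θ : ℝ)
    (s : Fin n → ZMod 2) : ℝ :=
  ∑ x ∈ Finset.univ.filter (fun x : Fin n → ZMod 2 => dotProduct x s = 0), XProb P θ x

/-- The code `C_s`: the column span of the submatrix `P_s` of `P` consisting of the rows
not orthogonal to `s`, realized as the image of `d ↦ P_s ⬝ dᵀ`. -/
def Cs {k n : ℕ} (P : Matrix (Fin k) (Fin n) (ZMod 2)) (s : Fin n → ZMod 2) :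
    Finset ({i : Fin k // dotProduct (P i) s = 1} → ZMod 2) :=
  Finset.image (fun d : Fin n → ZMod 2 => fun i => dotProduct (P i.1) d) Finset.univ

open Finset Complex in
noncomputable def chi (t : ZMod 2) : ℂ := if t = 0 then 1 else -1

lemma zmod2_cases_s1 : ∀ t : ZMod 2, t = 0 ∨ t = 1 := by decide

lemma chi_add (a b : ZMod 2) : chi (a + b) = chi a * chi b := by
  rcases zmod2_cases_s1 a with h | h <;> rcases zmod2_cases_s1 b with h' | h' <;>
    subst h <;> subst h' <;> simp [chi]
  · decide

lemma chi_sum {ι : Type*} (T : Finset ι) (f : ι → ZMod 2) :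
    chi (∑ j ∈ T, f j) = ∏ j ∈ T, chi (f j) := by
  classical
  induction T using Finset.cons_induction with
  | empty => simp [chi]
  | cons a T ha ih => rw [Finset.sum_cons, Finset.prod_cons, chi_add, ih]

lemma sum_zmod2 {M : Type*} [AddCommMonoid M] (F : ZMod 2 → M) :
    ∑ t : ZMod 2, F t = F 0 + F 1 := by
  have : (Finset.univ : Finset (ZMod 2)) = {0, 1} := by decide
  rw [this]; simp

lemma prod_eq_pow_wt {ι : Type*} [Fintype ι] [DecidableEq ι] (a : ι → ZMod 2) (x y : ℂ) :
    ∏ j, (if a j = 1 then x else y) = x ^ wt a * y ^ (Fintype.card ι - wt a) := by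
  classical
  rw [← Finset.prod_filter_mul_prod_filter_not Finset.univ (fun j => a j = 1)]
  have h1 : ∏ j ∈ Finset.univ.filter (fun j => a j = 1), (if a j = 1 then x else y)
      = x ^ wt a := by
    have h : ∀ j ∈ Finset.univ.filter (fun j => a j = 1), (if a j = 1 then x else y) = x :=
      fun j hj => by simp_all
    rw [Finset.prod_congr rfl h, Finset.prod_const]; rfl
  have h2 : ∏ j ∈ Finset.univ.filter (fun j => ¬ a j = 1), (if a j = 1 then x else y)
      = y ^ (Finset.univ.filter fun j => ¬ a j = 1).card := by
    have h : ∀ j ∈ Finset.univ.filter (fun j => ¬ a j = 1), (if a j = 1 then x else y) = y :=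
      fun j hj => by simp_all
    rw [Finset.prod_congr rfl h, Finset.prod_const]
  have h3 : (Finset.univ.filter fun j => ¬ a j = 1).card = Fintype.card ι - wt a := by
    have := Finset.card_filter_add_card_filter_not
      (s := (Finset.univ : Finset ι)) (p := fun j => a j = 1)
    simp only [Finset.card_univ] at this
    unfold wt; omega
  rw [h1, h2, h3]

lemma prod_ite_chi_mul {ι : Type*} [Fintype ι] [DecidableEq ι] (d c : ι → ZMod 2) (Z C : ℂ) :
    ∏ i, (if d i = 1 then chi (c i) * Z else C)
      = chi (∑ i, d i * c i) * (Z ^ wt d * C ^ (Fintype.card ι - wt d)) := by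
  have h : ∀ i, (if d i = 1 then chi (c i) * Z else C)
      = chi (d i * c i) * (if d i = 1 then Z else C) := by
    intro i
    rcases zmod2_cases_s1 (d i) with h | h <;> simp [h, chi]
  rw [Finset.prod_congr rfl (fun i _ => h i), Finset.prod_mul_distrib, ← chi_sum,
    prod_eq_pow_wt]

lemma sum_sign {R : Type*} [CommRing R] {ι : Type*} [Fintype ι] [DecidableEq ι] (c : ι → ZMod 2) :
    ∑ i, (if c i = 1 then (-1 : R) else 1) = (Fintype.card ι : R) - 2 * (wt c : R) := by
  classical
  have h : ∀ i, (if c i = 1 then (-1 : R) else 1) = 1 - 2 * (if c i = 1 then (1:R) else 0) := by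
    intro i; split <;> norm_num
  rw [Finset.sum_congr rfl (fun i _ => h i), Finset.sum_sub_distrib]
  rw [← Finset.mul_sum, Finset.sum_boole, Finset.sum_const, Finset.card_univ,
    nsmul_eq_mul, mul_one]
  rfl

lemma ite_chi_expand (t : ZMod 2) (X : ℂ) :
    (if t = 0 then X else 0) = (1 + chi t) / 2 * X := by
  rcases zmod2_cases_s1 t with h | h <;> subst h <;> simp [chi] <;> norm_num

noncomputable def g (θ : ℝ) (t : ZMod 2) : ℂ := if t = 1 then Complex.I * Real.sin θ else Real.cos θ

lemma zmod2_add_zero (t : ZMod 2) : t + 0 = t := add_zero t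

lemma factor0 (θ : ℝ) (t' : ZMod 2) :
    ∑ t : ZMod 2, g θ t * (starRingEnd ℂ) (g θ (t + t')) = if t' = 0 then 1 else 0 := by
  rcases zmod2_cases_s1 t' with h | h <;> subst h <;> rw [sum_zmod2]
  · norm_num [g, Complex.ext_iff, Complex.cos_ofReal_re, Complex.sin_ofReal_re]
    nlinarith [Real.sin_sq_add_cos_sq θ]
  · norm_num [g, Complex.ext_iff, Complex.cos_ofReal_re, Complex.sin_ofReal_re,
      show ((2:ZMod 2) = 1) = False by decide, show ((0:ZMod 2)+1 : ZMod 2) = 1 from rfl]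
    ring

lemma factor1 (θ : ℝ) (vj ej : ZMod 2) :
    ∑ t : ZMod 2, chi (t * vj) * (g θ t * (starRingEnd ℂ) (g θ (t + ej)))
      = if vj = 1 then (if ej = 1 then -(Complex.I * Real.sin (2*θ)) else (Real.cos (2*θ) : ℂ))
        else (if ej = 0 then 1 else 0) := by
  rcases zmod2_cases_s1 vj with hv | hv <;> subst hv
  · have h0 := factor0 θ ej
    have hch : chi 0 = 1 := by simp [chi]
    simp only [mul_zero, hch, one_mul]
    rw [h0]
    norm_num
  · rcases zmod2_cases_s1 ej with he | he <;> subst he <;> rw [sum_zmod2]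
    · norm_num [g, chi, Complex.ext_iff, Complex.cos_ofReal_re, Complex.sin_ofReal_re]
      rw [show (2:ℂ)*(θ:ℂ) = ((2*θ:ℝ):ℂ) by push_cast; ring, Complex.cos_ofReal_re,
        Complex.cos_ofReal_im]
      refine ⟨?_, rfl⟩
      nlinarith [Real.sin_sq_add_cos_sq θ, Real.cos_two_mul θ]
    · norm_num [g, chi, Complex.ext_iff, Complex.cos_ofReal_re, Complex.sin_ofReal_re,
        show ((2:ZMod 2) = 1) = False by decide, Real.sin_two_mul]
      ring

lemma cos_eq_re_prod {ι : Type*} [Fintype ι] [DecidableEq ι] (θ : ℝ) (c : ι → ZMod 2) :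
    Real.cos (2 * θ * ((Fintype.card ι : ℝ) - 2 * (wt c : ℝ)))
      = (∏ i, ((Real.cos (2*θ) : ℂ) + chi (c i) * (Complex.I * Real.sin (2*θ)))).re := by
  have h1 : ∀ i, (Real.cos (2*θ):ℂ) + chi (c i) * (Complex.I * Real.sin (2*θ))
      = Complex.exp (((2*θ*(if c i = 1 then (-1:ℝ) else 1) : ℝ) : ℂ) * Complex.I) := by
    intro i
    rcases zmod2_cases_s1 (c i) with h | h <;> rw [h] <;> norm_num [chi] <;> push_cast
    · rw [Complex.exp_mul_I]
      push_cast
      ring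
    · rw [show -(2*(θ:ℂ)*Complex.I) = (-(2*(θ:ℂ)))*Complex.I by ring, Complex.exp_mul_I,
        Complex.cos_neg, Complex.sin_neg]
      ring
  rw [Finset.prod_congr rfl (fun i _ => h1 i), ← Complex.exp_sum]
  have h2 : ∑ i, (((2*θ*(if c i = 1 then (-1:ℝ) else 1) : ℝ) : ℂ) * Complex.I)
      = ((2 * θ * ((Fintype.card ι : ℝ) - 2 * (wt c : ℝ)) : ℝ) : ℂ) * Complex.I := by
    rw [← Finset.sum_mul]
    congr 1
    push_cast [apply_ite (Complex.ofReal)]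
    rw [← Finset.mul_sum, sum_sign]
  rw [h2, Complex.exp_ofReal_mul_I_re]

variable {k n : ℕ} (P : Matrix (Fin k) (Fin n) (ZMod 2)) (s : Fin n → ZMod 2)

def Dual : Finset ({i : Fin k // dotProduct (P i) s = 1} → ZMod 2) :=
  Finset.univ.filter
    (fun d => ∀ x : Fin n,
      (∑ i : {i : Fin k // dotProduct (P i) s = 1}, d i * P i.1 x) = 0)

lemma Cs_add {c c' : {i : Fin k // dotProduct (P i) s = 1} → ZMod 2}
    (hc : c ∈ Cs P s) (hc' : c' ∈ Cs P s) : c + c' ∈ Cs P s := by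
  simp only [Cs, Finset.mem_image, Finset.mem_univ, true_and] at *
  obtain ⟨u, hu⟩ := hc
  obtain ⟨u', hu'⟩ := hc'
  exact ⟨u + u', by funext i; simp [← hu, ← hu', dotProduct_add]⟩

lemma orth (d : {i : Fin k // dotProduct (P i) s = 1} → ZMod 2) :
    ∑ c ∈ Cs P s, chi (dotProduct d c)
      = if d ∈ Dual P s then ((Cs P s).card : ℂ) else 0 := by
  by_cases hd : d ∈ Dual P s
  · rw [if_pos hd]
    have h1 : ∀ c ∈ Cs P s, chi (dotProduct d c) = 1 := by
      intro c hc
      simp only [Cs, Finset.mem_image, Finset.mem_univ, true_and] at hc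
      obtain ⟨u, hu⟩ := hc
      have hdc : dotProduct d c = 0 := by
        subst hu
        simp only [Dual, Finset.mem_filter] at hd
        calc dotProduct d (fun i => dotProduct (P i.1) u)
            = ∑ i, ∑ x, d i * P i.1 x * u x := by
              simp [dotProduct, Finset.mul_sum, mul_assoc]
          _ = ∑ x, (∑ i, d i * P i.1 x) * u x := by
              rw [Finset.sum_comm]
              simp [Finset.sum_mul]
          _ = 0 := by
              simp only [hd.2]
              simp
      rw [hdc]; simp [chi]
    rw [Finset.sum_congr rfl h1, Finset.sum_const, nsmul_eq_mul, mul_one]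
  · rw [if_neg hd]
    simp only [Dual, Finset.mem_filter, Finset.mem_univ, true_and, not_forall] at hd
    obtain ⟨x0, hx0⟩ := hd
    have hx1 : ∑ i, d i * P i.1 x0 = 1 := by
      rcases zmod2_cases_s1 (∑ i, d i * P i.1 x0) with h | h
      · exact absurd h hx0
      · exact h
    set c0 : {i : Fin k // dotProduct (P i) s = 1} → ZMod 2 := fun i => P i.1 x0 with hc0def
    have hc0 : c0 ∈ Cs P s := by
      simp only [Cs, Finset.mem_image, Finset.mem_univ, true_and]
      exact ⟨Pi.single x0 1, by funext i; simp [dotProduct_single, hc0def]⟩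
    have hdc0 : dotProduct d c0 = 1 := hx1
    set S := ∑ c ∈ Cs P s, chi (dotProduct d c) with hS
    have key : S = ∑ c ∈ Cs P s, -chi (dotProduct d c) := by
      refine Finset.sum_nbij' (i := fun c => c + c0) (j := fun c => c + c0)
        (fun c hc => Cs_add P s hc hc0) (fun c hc => Cs_add P s hc hc0)
        (fun c hc => by funext i; simp [add_assoc, CharTwo.add_self_eq_zero])
        (fun c hc => by funext i; simp [add_assoc, CharTwo.add_self_eq_zero])
        (fun c hc => ?_)
      rw [dotProduct_add, chi_add, hdc0]
      simp [chi]
    rw [Finset.sum_neg_distrib, ← hS] at key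
    linear_combination (1/2 : ℂ) * key

lemma Cs_nonempty : (Cs P s).Nonempty :=
  ⟨_, Finset.mem_image_of_mem _ (Finset.mem_univ 0)⟩

lemma rhs_eq (θ : ℝ) :
    (1 / ((Cs P s).card : ℝ)) * ∑ c ∈ Cs P s,
        (Real.cos (θ * ((Fintype.card {i : Fin k // dotProduct (P i) s = 1} : ℝ)
          - 2 * (wt c : ℝ)))) ^ 2
      = 1/2 + (1/2) * (∑ d ∈ Dual P s,
          (Complex.I * Real.sin (2*θ)) ^ (wt d) * (Real.cos (2*θ):ℂ)
            ^ (Fintype.card {i : Fin k // dotProduct (P i) s = 1} - wt d)).re := by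
  classical
  set ι := {i : Fin k // dotProduct (P i) s = 1}
  set m := Fintype.card ι with hm
  set Z : ℂ := Complex.I * Real.sin (2*θ) with hZ
  set C : ℂ := (Real.cos (2*θ) : ℂ) with hC
  -- step 1: pointwise cos² to Re of product
  have step1 : ∀ c : ι → ZMod 2,
      (Real.cos (θ * ((m : ℝ) - 2 * (wt c : ℝ)))) ^ 2
        = 1/2 + (1/2) * (∏ i, (C + chi (c i) * Z)).re := by
    intro c
    rw [Real.cos_sq, show 2 * (θ * ((m:ℝ) - 2*(wt c : ℝ))) = 2*θ*((m:ℝ) - 2*(wt c:ℝ)) by ring,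
      cos_eq_re_prod θ c]
    ring
  -- step 2: expand the product as a sum over d
  have step2 : ∀ c : ι → ZMod 2,
      (∏ i, (C + chi (c i) * Z)) = ∑ d : ι → ZMod 2, chi (dotProduct d c) * (Z ^ wt d * C ^ (m - wt d)) := by
    intro c
    have h1 : ∀ i : ι, C + chi (c i) * Z = ∑ t : ZMod 2, (if t = 1 then chi (c i) * Z else C) := by
      intro i
      rw [sum_zmod2]
      norm_num
    rw [Finset.prod_congr rfl (fun i _ => h1 i), Finset.prod_univ_sum, Fintype.piFinset_univ]
    apply Finset.sum_congr rfl
    intro d _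
    rw [prod_ite_chi_mul]
    rfl
  -- step 3: sum over c and use orthogonality
  have step3 : ∑ c ∈ Cs P s, (∏ i, (C + chi (c i) * Z))
      = ((Cs P s).card : ℂ) * ∑ d ∈ Dual P s, Z ^ wt d * C ^ (m - wt d) := by
    rw [Finset.sum_congr rfl (fun c _ => step2 c), Finset.sum_comm]
    have h2 : ∀ d : ι → ZMod 2,
        ∑ c ∈ Cs P s, chi (dotProduct d c) * (Z ^ wt d * C ^ (m - wt d))
          = (if d ∈ Dual P s then ((Cs P s).card : ℂ) else 0) * (Z ^ wt d * C ^ (m - wt d)) := by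
      intro d
      rw [← Finset.sum_mul, orth]
    rw [Finset.sum_congr rfl (fun d _ => h2 d)]
    simp only [ite_mul, zero_mul]
    rw [Finset.sum_ite_mem, Finset.univ_inter, Finset.mul_sum]
  -- assemble
  have hcard : ((Cs P s).card : ℝ) ≠ 0 := by
    simp [Finset.card_ne_zero_of_mem (Cs_nonempty P s).choose_spec]
  rw [Finset.sum_congr rfl (fun c _ => step1 c), Finset.sum_add_distrib, Finset.sum_const,
    ← Finset.mul_sum, ← Complex.re_sum, step3]
  rw [show (((Cs P s).card : ℂ) * ∑ d ∈ Dual P s, Z ^ wt d * C ^ (m - wt d))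
      = ((((Cs P s).card : ℝ)) : ℂ) * ∑ d ∈ Dual P s, Z ^ wt d * C ^ (m - wt d) by push_cast; ring]
  rw [Complex.re_ofReal_mul]
  field_simp
  ring

noncomputable def Wf (θ : ℝ) {k : ℕ} (a : Fin k → ZMod 2) : ℂ := ∏ j, g θ (a j)

noncomputable def Ff {k n : ℕ} (P : Matrix (Fin k) (Fin n) (ZMod 2)) (θ : ℝ)
    (x : Fin n → ZMod 2) : ℂ :=
  ∑ a ∈ Finset.univ.filter (fun a : Fin k → ZMod 2 => Matrix.vecMul a P = x), Wf θ a

lemma Wf_eq (θ : ℝ) {k : ℕ} (a : Fin k → ZMod 2) :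
    Wf θ a = (Real.cos θ : ℂ) ^ (k - wt a) * (Complex.I * Real.sin θ) ^ (wt a) := by
  unfold Wf g
  rw [prod_eq_pow_wt, Fintype.card_fin, mul_comm]

lemma XProb_eq {k n : ℕ} (P : Matrix (Fin k) (Fin n) (ZMod 2)) (θ : ℝ) (x : Fin n → ZMod 2) :
    XProb P θ x = (Ff P θ x * (starRingEnd ℂ) (Ff P θ x)).re := by
  unfold XProb Ff
  rw [Finset.sum_congr rfl (fun a _ => (Wf_eq θ a).symm), Complex.mul_conj, Complex.ofReal_re,
    Complex.sq_norm]

lemma bias_eq_re {k n : ℕ} (P : Matrix (Fin k) (Fin n) (ZMod 2)) (θ : ℝ) (s : Fin n → ZMod 2) :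
    bias P θ s = (∑ x ∈ Finset.univ.filter (fun x : Fin n → ZMod 2 => dotProduct x s = 0),
      Ff P θ x * (starRingEnd ℂ) (Ff P θ x)).re := by
  unfold bias
  rw [Complex.re_sum]
  exact Finset.sum_congr rfl (fun x _ => XProb_eq P θ x)

lemma stepC (θ : ℝ) :
    ∑ x ∈ Finset.univ.filter (fun x : Fin n → ZMod 2 => dotProduct x s = 0),
        Ff P θ x * (starRingEnd ℂ) (Ff P θ x)
      = ∑ a : Fin k → ZMod 2,
          if dotProduct (Matrix.vecMul a P) s = 0 then
            Wf θ a * ∑ b ∈ Finset.univ.filter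
              (fun b : Fin k → ZMod 2 => Matrix.vecMul b P = Matrix.vecMul a P),
              (starRingEnd ℂ) (Wf θ b)
          else 0 := by
  classical
  have h1 : ∀ x : Fin n → ZMod 2, Ff P θ x * (starRingEnd ℂ) (Ff P θ x)
      = ∑ a ∈ Finset.univ.filter (fun a : Fin k → ZMod 2 => Matrix.vecMul a P = x),
          (Wf θ a * ∑ b ∈ Finset.univ.filter (fun b : Fin k → ZMod 2 => Matrix.vecMul b P = x),
            (starRingEnd ℂ) (Wf θ b)) := by
    intro x
    unfold Ff
    rw [map_sum, Finset.sum_mul]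
  rw [Finset.sum_congr rfl (fun x _ => h1 x)]
  rw [Finset.sum_congr rfl (fun x _ => Finset.sum_filter _ _)]
  rw [Finset.sum_comm]
  apply Finset.sum_congr rfl
  intro a _
  rw [Finset.sum_ite_eq _ (Matrix.vecMul a P)
    (fun x => Wf θ a * ∑ b ∈ Finset.univ.filter
      (fun b : Fin k → ZMod 2 => Matrix.vecMul b P = x), (starRingEnd ℂ) (Wf θ b))]
  simp only [Finset.mem_filter, Finset.mem_univ, true_and]

lemma add2 (t : ZMod 2) : t + t = 0 := by
  rcases zmod2_cases_s1 t with h | h <;> subst h <;> decide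

lemma addf2 {α : Type*} (f : α → ZMod 2) : f + f = 0 := by
  funext i; exact add2 (f i)

lemma add_cancel2 {α : Type*} (a b : α → ZMod 2) : a + (a + b) = b := by
  rw [← add_assoc, addf2, zero_add]

lemma stepD (θ : ℝ) (a : Fin k → ZMod 2) :
    ∑ b ∈ Finset.univ.filter
        (fun b : Fin k → ZMod 2 => Matrix.vecMul b P = Matrix.vecMul a P),
        (starRingEnd ℂ) (Wf θ b)
      = ∑ e ∈ Finset.univ.filter (fun e : Fin k → ZMod 2 => Matrix.vecMul e P = 0),
          (starRingEnd ℂ) (Wf θ (a + e)) := by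
  classical
  refine Finset.sum_nbij' (i := fun b => a + b) (j := fun e => a + e) ?_ ?_ ?_ ?_ ?_
  · intro b hb
    simp only [Finset.mem_filter, Finset.mem_univ, true_and] at *
    rw [Matrix.add_vecMul, hb, ← Matrix.add_vecMul, addf2, Matrix.zero_vecMul]
  · intro e he
    simp only [Finset.mem_filter, Finset.mem_univ, true_and] at *
    rw [Matrix.add_vecMul, he, add_zero]
  · intro b _; exact add_cancel2 a b
  · intro e _; exact add_cancel2 a e
  · intro b _
    rw [add_cancel2 a b]

lemma prod_ind_on {α : Type*} [Fintype α] [DecidableEq α] (T : Finset α) (e : α → ZMod 2) :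
    ∏ j ∈ T, (if e j = 0 then (1:ℂ) else 0)
      = if (∀ j ∈ T, e j = 0) then 1 else 0 := by
  by_cases h : ∀ j ∈ T, e j = 0
  · rw [if_pos h]
    exact Finset.prod_eq_one (fun j hj => by rw [if_pos (h j hj)])
  · rw [if_neg h]
    push_neg at h
    obtain ⟨j, hj, hje⟩ := h
    exact Finset.prod_eq_zero hj (by rw [if_neg hje])

lemma stepF (θ : ℝ) (e : Fin k → ZMod 2) :
    ∑ a : Fin k → ZMod 2, Wf θ a * (starRingEnd ℂ) (Wf θ (a + e))
      = if e = 0 then 1 else 0 := by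
  classical
  have h1 : ∀ a : Fin k → ZMod 2, Wf θ a * (starRingEnd ℂ) (Wf θ (a + e))
      = ∏ j, (g θ (a j) * (starRingEnd ℂ) (g θ (a j + e j))) := by
    intro a
    unfold Wf
    rw [map_prod, Finset.prod_mul_distrib]
    rfl
  rw [Finset.sum_congr rfl (fun a _ => h1 a), ← Fintype.piFinset_univ,
    ← Finset.prod_univ_sum (fun _ => Finset.univ)
      (fun j t => g θ t * (starRingEnd ℂ) (g θ (t + e j)))]
  rw [Finset.prod_congr rfl (fun j _ => factor0 θ (e j))]
  rw [prod_ind_on]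
  congr 1
  simp [funext_iff]

lemma stepG (θ : ℝ) (e : Fin k → ZMod 2) :
    ∑ a : Fin k → ZMod 2,
        chi (∑ j, a j * dotProduct (P j) s) * (Wf θ a * (starRingEnd ℂ) (Wf θ (a + e)))
      = ∏ j, (if dotProduct (P j) s = 1
          then (if e j = 1 then -(Complex.I * Real.sin (2*θ)) else (Real.cos (2*θ) : ℂ))
          else (if e j = 0 then (1:ℂ) else 0)) := by
  classical
  have h1 : ∀ a : Fin k → ZMod 2,
      chi (∑ j, a j * dotProduct (P j) s) * (Wf θ a * (starRingEnd ℂ) (Wf θ (a + e)))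
        = ∏ j, (chi (a j * dotProduct (P j) s)
            * (g θ (a j) * (starRingEnd ℂ) (g θ (a j + e j)))) := by
    intro a
    unfold Wf
    rw [chi_sum, map_prod, Finset.prod_mul_distrib, Finset.prod_mul_distrib]
    rfl
  rw [Finset.sum_congr rfl (fun a _ => h1 a), ← Fintype.piFinset_univ,
    ← Finset.prod_univ_sum (fun _ => Finset.univ)
      (fun j t => chi (t * dotProduct (P j) s)
        * (g θ t * (starRingEnd ℂ) (g θ (t + e j))))]
  exact Finset.prod_congr rfl (fun j _ => factor1 θ (dotProduct (P j) s) (e j))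

lemma vecMul_apply (e : Fin k → ZMod 2) (x : Fin n) :
    Matrix.vecMul e P x = ∑ j, e j * P j x := by
  simp [Matrix.vecMul, dotProduct]

lemma stepH (θ : ℝ) :
    ∑ e ∈ Finset.univ.filter (fun e : Fin k → ZMod 2 => Matrix.vecMul e P = 0),
        ∏ j, (if dotProduct (P j) s = 1
          then (if e j = 1 then -(Complex.I * Real.sin (2*θ)) else (Real.cos (2*θ) : ℂ))
          else (if e j = 0 then (1:ℂ) else 0))
      = ∑ d ∈ Dual P s, (-(Complex.I * Real.sin (2*θ))) ^ (wt d)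
          * (Real.cos (2*θ):ℂ) ^ (Fintype.card {i : Fin k // dotProduct (P i) s = 1} - wt d) := by
  classical
  set Z : ℂ := -(Complex.I * Real.sin (2*θ)) with hZ
  set C : ℂ := (Real.cos (2*θ) : ℂ) with hC
  set T : Finset (Fin k) := Finset.univ.filter (fun j => dotProduct (P j) s = 1) with hT
  have hsplit : ∀ e : Fin k → ZMod 2,
      (∏ j, (if dotProduct (P j) s = 1
          then (if e j = 1 then Z else C) else (if e j = 0 then (1:ℂ) else 0)))
        = (∏ j ∈ T, (if e j = 1 then Z else C))
          * (if (∀ j ∈ Finset.univ.filter (fun j => ¬ dotProduct (P j) s = 1), e j = 0)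
              then 1 else 0) := by
    intro e
    rw [← Finset.prod_filter_mul_prod_filter_not Finset.univ
      (fun j => dotProduct (P j) s = 1)]
    congr 1
    · exact Finset.prod_congr rfl (fun j hj => if_pos (Finset.mem_filter.mp hj).2)
    · rw [Finset.prod_congr rfl (fun j hj => if_neg (Finset.mem_filter.mp hj).2), prod_ind_on]
      congr
  rw [Finset.sum_congr rfl (fun e _ => hsplit e)]
  rw [Finset.sum_congr rfl (fun e _ => mul_ite _ _ _ _)]
  simp only [mul_one, mul_zero]
  rw [← Finset.sum_filter, Finset.filter_filter]
  refine Finset.sum_nbij' (i := fun e => fun i => e i.1)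
    (j := fun d => fun j => if h : dotProduct (P j) s = 1 then d ⟨j, h⟩ else 0)
    ?_ ?_ ?_ ?_ ?_
  · intro e he
    simp only [Finset.mem_filter, Finset.mem_univ, true_and] at he
    obtain ⟨hK, hc⟩ := he
    simp only [Dual, Finset.mem_filter, Finset.mem_univ, true_and]
    intro x
    have h1 : ∑ i : {i : Fin k // dotProduct (P i) s = 1}, e i.1 * P i.1 x
        = ∑ j ∈ T, e j * P j x := by
      rw [Finset.sum_subtype (p := fun i => dotProduct (P i) s = 1) T
        (by simp [hT]) (fun j => e j * P j x)]
    rw [h1, Finset.sum_subset (Finset.filter_subset _ _)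
      (fun j _ hj => by rw [hc j (by simpa [hT] using hj), zero_mul])]
    rw [← vecMul_apply, hK, Pi.zero_apply]
  · intro d hd
    simp only [Dual, Finset.mem_filter, Finset.mem_univ, true_and] at hd
    simp only [Finset.mem_filter, Finset.mem_univ, true_and]
    constructor
    · funext x
      rw [vecMul_apply, Pi.zero_apply,
        ← Finset.sum_subset (Finset.filter_subset
          (fun j => dotProduct (P j) s = 1) Finset.univ)
          (fun j _ hj => by
            rw [dif_neg (by simpa using hj), zero_mul])]
      rw [Finset.sum_subtype (p := fun i => dotProduct (P i) s = 1)
        (Finset.univ.filter (fun j => dotProduct (P j) s = 1))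
        (by simp) (fun j => (if h : dotProduct (P j) s = 1 then d ⟨j, h⟩ else 0) * P j x)]
      rw [← hd x]
      apply Finset.sum_congr rfl
      intro i _
      rw [dif_pos i.2]
    · intro j hj
      rw [dif_neg (by simpa [hT] using hj)]
  · intro e he
    simp only [Finset.mem_filter, Finset.mem_univ, true_and] at he
    funext j
    dsimp only
    by_cases h : dotProduct (P j) s = 1
    · rw [dif_pos h]
    · rw [dif_neg h, he.2 j (by simpa [hT] using h)]
  · intro d _
    funext i
    dsimp only
    rw [dif_pos i.2]
  · intro e _
    rw [Finset.prod_subtype (p := fun i => dotProduct (P i) s = 1) T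
      (by simp [hT]) (fun j => if e j = 1 then Z else C)]
    exact prod_eq_pow_wt (fun i : {i : Fin k // dotProduct (P i) s = 1} => e i.1) Z C

lemma dot_vecMul (a : Fin k → ZMod 2) :
    dotProduct (Matrix.vecMul a P) s = ∑ j, a j * dotProduct (P j) s := by
  rw [← Matrix.dotProduct_mulVec]
  simp [dotProduct, Matrix.mulVec]

lemma lhs_eq (θ : ℝ) :
    bias P θ s = 1/2 + (1/2) * (∑ d ∈ Dual P s, (-(Complex.I * Real.sin (2*θ))) ^ (wt d)
        * (Real.cos (2*θ):ℂ)
          ^ (Fintype.card {i : Fin k // dotProduct (P i) s = 1} - wt d)).re := by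
  classical
  set K : Finset (Fin k → ZMod 2) :=
    Finset.univ.filter (fun e : Fin k → ZMod 2 => Matrix.vecMul e P = 0) with hK
  rw [bias_eq_re, stepC]
  have ha : ∀ a : Fin k → ZMod 2,
      (if dotProduct (Matrix.vecMul a P) s = 0 then
        Wf θ a * ∑ b ∈ Finset.univ.filter
          (fun b : Fin k → ZMod 2 => Matrix.vecMul b P = Matrix.vecMul a P),
          (starRingEnd ℂ) (Wf θ b)
      else 0)
      = 1/2 * (∑ e ∈ K, Wf θ a * (starRingEnd ℂ) (Wf θ (a + e)))
        + 1/2 * (∑ e ∈ K, chi (∑ j, a j * dotProduct (P j) s)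
            * (Wf θ a * (starRingEnd ℂ) (Wf θ (a + e)))) := by
    intro a
    rw [stepD, dot_vecMul, ite_chi_expand, ← Finset.mul_sum, ← Finset.mul_sum, ← Finset.mul_sum]
    ring
  rw [Finset.sum_congr rfl (fun a _ => ha a), Finset.sum_add_distrib,
    ← Finset.mul_sum, ← Finset.mul_sum, Finset.sum_comm, Finset.sum_comm
      (t := K) (s := (Finset.univ : Finset (Fin k → ZMod 2)))]
  rw [Finset.sum_congr rfl (fun e (_ : e ∈ K) => stepF θ e),
    Finset.sum_congr rfl (fun e (_ : e ∈ K) => (stepG P s θ e))]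
  rw [hK, Finset.sum_ite_eq' (Finset.univ.filter
    (fun e : Fin k → ZMod 2 => Matrix.vecMul e P = 0)) 0 (fun _ => (1:ℂ))]
  rw [if_pos (by simp [Matrix.zero_vecMul])]
  rw [← hK, stepH]
  rw [Complex.add_re, show ((1:ℂ)/2 * 1) = ((1/2 : ℝ) : ℂ) by norm_num,
    show ((1:ℂ)/2) = ((1/2 : ℝ) : ℂ) by norm_num, Complex.re_ofReal_mul, Complex.ofReal_re]

theorem bias_eq_expectation_over_code' (θ : ℝ) :
    bias P θ s =
      (1 / ((Cs P s).card : ℝ)) * ∑ c ∈ Cs P s,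
        (Real.cos (θ * ((Fintype.card {i : Fin k // dotProduct (P i) s = 1} : ℝ)
          - 2 * (wt c : ℝ)))) ^ 2 := by
  rw [lhs_eq P s θ, rhs_eq P s θ]
  congr 2
  calc (∑ d ∈ Dual P s, (-(Complex.I * Real.sin (2*θ))) ^ (wt d)
        * (Real.cos (2*θ):ℂ)
          ^ (Fintype.card {i : Fin k // dotProduct (P i) s = 1} - wt d)).re
      = ((starRingEnd ℂ) (∑ d ∈ Dual P s, (Complex.I * Real.sin (2*θ)) ^ (wt d)
        * (Real.cos (2*θ):ℂ)
          ^ (Fintype.card {i : Fin k // dotProduct (P i) s = 1} - wt d))).re := by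
        rw [map_sum]
        congr 1
        refine Finset.sum_congr rfl (fun d _ => ?_)
        rw [map_mul, map_pow, map_pow, map_mul, Complex.conj_I, Complex.conj_ofReal,
          Complex.conj_ofReal, neg_mul]
    _ = _ := by rw [Complex.conj_re]

theorem bias_eq_expectation_over_code {k n : ℕ} (P : Matrix (Fin k) (Fin n) (ZMod 2))
    (θ : ℝ) (s : Fin n → ZMod 2) :
    bias P θ s =
      (1 / ((Cs P s).card : ℝ)) * ∑ c ∈ Cs P s,
        (Real.cos (θ * ((Fintype.card {i : Fin k // dotProduct (P i) s = 1} : ℝ)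
          - 2 * (wt c : ℝ)))) ^ 2 :=
  bias_eq_expectation_over_code' P s θ
end

section
/- For a constant-action X-program with θ an odd multiple of π/2, the output is deterministically equal to the sum (over F_2) of all rows of P: P(X = Σ_{p ∈ P} p) = 1. -/
theorem xprog_theta_odd_multiple_half_pi {k n : ℕ} (P : Matrix (Fin k) (Fin n) (ZMod 2))
    (θ : ℝ) (h : ∃ m : ℤ, θ = (2 * m + 1) * (Real.pi / 2)) :
    XProb P θ (∑ i : Fin k, P i) = 1 := by
  have hcos : Real.cos θ = 0 := by
    obtain ⟨m, rfl⟩ := h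
    rw [Real.cos_eq_zero_iff]
    exact ⟨m, by ring⟩
  have hsin : |Real.sin θ| = 1 := by
    have := Real.sin_sq_add_cos_sq θ
    rw [hcos] at this
    have h1 : Real.sin θ ^ 2 = 1 := by linarith
    nlinarith [abs_nonneg (Real.sin θ), sq_abs (Real.sin θ)]
  set ones : Fin k → ZMod 2 := fun _ => 1 with hones
  have hwt : wt ones = k := by
    simp [wt, hones]
  have hmem : ones ∈ Finset.univ.filter
      (fun a : Fin k → ZMod 2 => Matrix.vecMul a P = ∑ i : Fin k, P i) := by
    simp only [Finset.mem_filter, Finset.mem_univ, true_and]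
    funext j
    simp [Matrix.vecMul, dotProduct, hones, Finset.sum_apply]
    exact (Finset.sum_apply j Finset.univ fun i => P i).symm
  have hsum : (∑ a ∈ Finset.univ.filter
      (fun a : Fin k → ZMod 2 => Matrix.vecMul a P = ∑ i : Fin k, P i),
      (Real.cos θ : ℂ) ^ (k - wt a) * (Complex.I * Real.sin θ) ^ (wt a))
      = (Complex.I * Real.sin θ) ^ k := by
    rw [Finset.sum_eq_single_of_mem ones hmem]
    · rw [hwt]; simp
    · intro a _ hne
      have hlt : wt a < k := by
        refine lt_of_le_of_ne ?_ ?_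
        · simpa [wt] using Finset.card_filter_le Finset.univ (fun i => a i = 1)
        · intro heq
          apply hne
          have := (Finset.card_eq_iff_eq_univ _).mp (by rw [Fintype.card_fin]; simpa [wt] using heq)
          funext i
          have : i ∈ Finset.univ.filter (fun i => a i = 1) := by rw [this]; exact Finset.mem_univ i
          simpa [hones] using (Finset.mem_filter.mp this).2
      have : (Real.cos θ : ℂ) ^ (k - wt a) = 0 := by
        rw [hcos]
        exact zero_pow (by omega)
      rw [this, zero_mul]
  rw [XProb, hsum]
  rw [norm_pow, norm_mul, Complex.norm_I, Complex.norm_real, Real.norm_eq_abs, one_mul, hsin, one_pow, one_pow]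
end

section
/- Let P_s be an n_s-by-n binary matrix with column span C_s. Then the probability that two independent uniformly random codewords c₁, c₂ ∈ C_s are orthogonal over F_2 equals (1/2)(1 + 2^{−rank(P_sᵀ·P_s)}), where rank is taken over F_2. -/
open Finset

-- kernel cardinality lemma
lemma ker_card_mul {m n : ℕ} (A : Matrix (Fin m) (Fin n) (ZMod 2)) :
    (univ.filter fun d : Fin n → ZMod 2 => A.mulVec d = 0).card * 2 ^ A.rank = 2 ^ n := by
  classical
  have h1 : (univ.filter fun d : Fin n → ZMod 2 => A.mulVec d = 0).card
      = Fintype.card (LinearMap.ker A.mulVecLin) := by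
    rw [Fintype.card_subtype]
    congr 1
    ext d
    simp [LinearMap.mem_ker, Matrix.mulVecLin_apply]
  have h2 : Fintype.card (LinearMap.ker A.mulVecLin)
      = 2 ^ Module.finrank (ZMod 2) (LinearMap.ker A.mulVecLin) := by
    have := Module.card_eq_pow_finrank (K := ZMod 2) (V := LinearMap.ker A.mulVecLin)
    simpa using this
  have h3 := LinearMap.finrank_range_add_finrank_ker (A.mulVecLin)
  rw [h1, h2, Matrix.rank, ← pow_add]
  rw [add_comm, h3]
  simp

open Finset

-- half-count lemma for a linear functional given by dot product
lemma dot_half_count {n : ℕ} (w : Fin n → ZMod 2) :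
    2 * (univ.filter fun e : Fin n → ZMod 2 => dotProduct w e = 0).card
      = 2 ^ n + (if w = 0 then 2 ^ n else 0) := by
  classical
  by_cases hw : w = 0
  · subst hw
    simp [dotProduct, Finset.filter_true_of_mem, two_mul]
  · simp only [if_neg hw]
    obtain ⟨i, hi⟩ : ∃ i, w i ≠ 0 := by
      by_contra h
      push_neg at h
      exact hw (funext fun i => h i)
    have hi1 : w i = 1 := by
      have := hi; revert this; generalize w i = a; revert a; decide
    have key : ∀ e : Fin n → ZMod 2,
        dotProduct w (e + Pi.single i 1) = dotProduct w e + 1 := by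
      intro e
      rw [dotProduct_add, dotProduct_single, hi1, mul_one]
    have hbij : (univ.filter fun e : Fin n → ZMod 2 => dotProduct w e = 0).card
        = (univ.filter fun e : Fin n → ZMod 2 => ¬ dotProduct w e = 0).card := by
      apply Finset.card_bij' (fun e _ => e + Pi.single i 1) (fun e _ => e + Pi.single i 1)
      · intro e _
        ext j
        simp [add_assoc, CharTwo.add_self_eq_zero]
      · intro e _
        ext j
        simp [add_assoc, CharTwo.add_self_eq_zero]
      · intro e he
        simp only [mem_filter, mem_univ, true_and] at he ⊢
        rw [key, he]; decide
      · intro e he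
        simp only [mem_filter, mem_univ, true_and] at he ⊢
        rw [key]
        revert he; generalize dotProduct w e = a; revert a; decide
    have hsplit := Finset.card_filter_add_card_filter_not
      (s := (univ : Finset (Fin n → ZMod 2)))
      (p := fun e => dotProduct w e = 0)
    have hcard : (univ : Finset (Fin n → ZMod 2)).card = 2 ^ n := by
      simp [Finset.card_univ]
    omega

open Finset

-- fiber constancy
lemma fiber_card {ns n : ℕ} (Ps : Matrix (Fin ns) (Fin n) (ZMod 2)) (d0 : Fin n → ZMod 2) :
    (univ.filter fun d : Fin n → ZMod 2 => Ps.mulVec d = Ps.mulVec d0).card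
      = (univ.filter fun d : Fin n → ZMod 2 => Ps.mulVec d = 0).card := by
  classical
  apply Finset.card_bij' (fun d _ => d + d0) (fun d _ => d + d0)
  · intro d hd
    simp only [mem_filter, mem_univ, true_and] at hd ⊢
    rw [Matrix.mulVec_add, hd]
    funext j
    exact CharTwo.add_self_eq_zero _
  · intro d hd
    simp only [mem_filter, mem_univ, true_and] at hd ⊢
    rw [Matrix.mulVec_add, hd, zero_add]
  · intro d _
    ext j; simp [add_assoc, CharTwo.add_self_eq_zero]
  · intro d _
    ext j; simp [add_assoc, CharTwo.add_self_eq_zero]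

lemma hdot_lemma {ns n : ℕ} (Ps : Matrix (Fin ns) (Fin n) (ZMod 2))
    (d e : Fin n → ZMod 2) :
    dotProduct (Ps.mulVec d) (Ps.mulVec e)
      = dotProduct ((Ps.transpose * Ps).mulVec d) e := by
  rw [Matrix.dotProduct_mulVec, ← Matrix.vecMul_transpose, Matrix.vecMul_vecMul]
  congr 1
  rw [← Matrix.mulVec_transpose, Matrix.transpose_mul, Matrix.transpose_transpose]


theorem code_orthogonality_prob_eq_rank {ns n : ℕ}
    (Ps : Matrix (Fin ns) (Fin n) (ZMod 2))
    (Cs : Finset (Fin ns → ZMod 2))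
    (hCs : Cs = Finset.image (fun d : Fin n → ZMod 2 => Matrix.mulVec Ps d) Finset.univ) :
    (((Cs ×ˢ Cs).filter (fun cc => dotProduct cc.1 cc.2 = 0)).card : ℝ) /
        ((Cs.card : ℝ)) ^ 2 =
      (1 / 2) * (1 + ((2 : ℝ) ^ (Matrix.rank (Ps.transpose * Ps)))⁻¹) := by
  classical
  set M := Ps.transpose * Ps with hM
  set r := M.rank with hr
  set K0 := (univ.filter fun d : Fin n → ZMod 2 => Ps.mulVec d = 0).card with hK0
  set K := (univ.filter fun d : Fin n → ZMod 2 => M.mulVec d = 0).card with hK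
  set T := ((Cs ×ˢ Cs).filter (fun cc => dotProduct cc.1 cc.2 = 0)).card with hT
  set N := (univ.filter fun p : (Fin n → ZMod 2) × (Fin n → ZMod 2) =>
      dotProduct (Ps.mulVec p.1) (Ps.mulVec p.2) = 0).card with hN
  -- fact: Cs.card * K0 = 2 ^ n
  have hCsK0 : Cs.card * K0 = 2 ^ n := by
    have hmem : ∀ d : Fin n → ZMod 2, d ∈ (univ : Finset (Fin n → ZMod 2)) →
        Ps.mulVec d ∈ Cs := by
      intro d _
      rw [hCs]
      exact mem_image_of_mem _ (mem_univ d)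
    have h := Finset.card_eq_sum_card_fiberwise hmem
    have h2 : ∀ c ∈ Cs, (univ.filter fun d : Fin n → ZMod 2 => Ps.mulVec d = c).card = K0 := by
      intro c hc
      rw [hCs] at hc
      obtain ⟨d0, _, hd0⟩ := Finset.mem_image.mp hc
      rw [← hd0]
      exact fiber_card Ps d0
    rw [Finset.sum_congr rfl h2, Finset.sum_const, smul_eq_mul] at h
    rw [← h]
    simp [Finset.card_univ]
  -- fact: N = T * (K0 * K0)
  have hNT : N = T * (K0 * K0) := by
    have hmem : ∀ p ∈ (univ.filter fun p : (Fin n → ZMod 2) × (Fin n → ZMod 2) =>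
        dotProduct (Ps.mulVec p.1) (Ps.mulVec p.2) = 0),
        (Ps.mulVec p.1, Ps.mulVec p.2) ∈
          (Cs ×ˢ Cs).filter (fun cc => dotProduct cc.1 cc.2 = 0) := by
      intro p hp
      simp only [mem_filter, mem_univ, true_and] at hp ⊢
      refine ⟨Finset.mem_product.mpr ⟨?_, ?_⟩, hp⟩
      · rw [hCs]; exact mem_image_of_mem _ (mem_univ p.1)
      · rw [hCs]; exact mem_image_of_mem _ (mem_univ p.2)
    have h := Finset.card_eq_sum_card_fiberwise hmem
    rw [hN, h]
    rw [Finset.sum_congr rfl (fun cc hcc => ?_), Finset.sum_const, smul_eq_mul]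
    -- per-fiber count
    obtain ⟨hccCs, hccdot⟩ := Finset.mem_filter.mp hcc
    obtain ⟨hcc1, hcc2⟩ := Finset.mem_product.mp hccCs
    have heq : ((univ.filter fun p : (Fin n → ZMod 2) × (Fin n → ZMod 2) =>
          dotProduct (Ps.mulVec p.1) (Ps.mulVec p.2) = 0).filter
          (fun p => (Ps.mulVec p.1, Ps.mulVec p.2) = cc))
        = ((univ : Finset (Fin n → ZMod 2)).filter fun d => Ps.mulVec d = cc.1) ×ˢ
          ((univ : Finset (Fin n → ZMod 2)).filter fun e => Ps.mulVec e = cc.2) := by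
      rw [Finset.filter_filter, ← Finset.filter_product, Finset.univ_product_univ]
      apply Finset.filter_congr
      intro p _
      constructor
      · rintro ⟨_, h2⟩
        exact ⟨congrArg Prod.fst h2, congrArg Prod.snd h2⟩
      · rintro ⟨h1, h2⟩
        refine ⟨?_, ?_⟩
        · rw [h1, h2]; exact hccdot
        · exact Prod.ext h1 h2
    rw [heq, Finset.card_product]
    obtain ⟨d1, _, hd1⟩ := Finset.mem_image.mp (hCs ▸ hcc1)
    obtain ⟨d2, _, hd2⟩ := Finset.mem_image.mp (hCs ▸ hcc2)
    rw [← hd1, ← hd2, fiber_card Ps d1, fiber_card Ps d2]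
  -- fact: 2 * N = 2^n * 2^n + K * 2^n
  have h2N : 2 * N = 2 ^ n * 2 ^ n + K * 2 ^ n := by
    have hNsum : N = ∑ d : Fin n → ZMod 2,
        (univ.filter fun e : Fin n → ZMod 2 =>
          dotProduct (M.mulVec d) e = 0).card := by
      rw [hN, Finset.card_filter, ← Finset.univ_product_univ, Finset.sum_product]
      refine Finset.sum_congr rfl fun d _ => ?_
      rw [Finset.card_filter]
      exact Finset.sum_congr rfl fun e _ => by rw [hM, hdot_lemma]
    calc 2 * N = ∑ d : Fin n → ZMod 2,
          2 * (univ.filter fun e : Fin n → ZMod 2 =>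
            dotProduct (M.mulVec d) e = 0).card := by
          rw [hNsum, Finset.mul_sum]
      _ = ∑ d : Fin n → ZMod 2,
            (2 ^ n + if M.mulVec d = 0 then 2 ^ n else 0) := by
          exact Finset.sum_congr rfl fun d _ => dot_half_count _
      _ = 2 ^ n * 2 ^ n + K * 2 ^ n := by
          rw [Finset.sum_add_distrib, Finset.sum_const, ← Finset.sum_filter,
            Finset.sum_const, smul_eq_mul, smul_eq_mul, ← hK]
          simp [Finset.card_univ]
  -- fact: K * 2 ^ r = 2 ^ n
  have hKr : K * 2 ^ r = 2 ^ n := ker_card_mul M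
  -- pass to the reals
  have hK0pos : 0 < K0 := by
    rw [hK0]
    refine Finset.card_pos.mpr ⟨0, ?_⟩
    simp
  have hCspos : 0 < Cs.card := by
    refine Finset.card_pos.mpr ?_
    rw [hCs]
    exact (Finset.univ_nonempty).image _
  have hA : (K0 : ℝ) * K0 * T = N := by
    rw [hNT]; push_cast; ring
  have hB : (Cs.card : ℝ) * K0 = 2 ^ n := by exact_mod_cast hCsK0
  have hC1 : 2 * (N : ℝ) = 2 ^ n * 2 ^ n + K * 2 ^ n := by exact_mod_cast h2N
  have hC2 : (K : ℝ) * 2 ^ r = 2 ^ n := by exact_mod_cast hKr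
  have hK0ne : (K0 : ℝ) ≠ 0 := by positivity
  have hCsne : (Cs.card : ℝ) ≠ 0 := by positivity
  have h1 : (T : ℝ) / (Cs.card : ℝ) ^ 2 = (N : ℝ) / ((2 : ℝ) ^ n) ^ 2 := by
    rw [div_eq_div_iff (by positivity) (by positivity), ← hB, ← hA]
    ring
  rw [h1]
  have h2r : (0:ℝ) < 2 ^ r := by positivity
  field_simp
  linear_combination ((2:ℝ) ^ r) * hC1 + ((2:ℝ) ^ n) * hC2
end
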